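/- Let k ≥ 0, n = 2k+1, and m = n+1. Let w be a weight function on m vertices with cut function δ_w. Identify ZMod n with the first n elements of Fin m, and for i ∈ ZMod n set Q_i = {i, i+1, …, i+k} and Q'_i = {i+1, …, i+k} (indices taken mod n), viewed as subsets of Fin m. Then ∑_{i ∈ ZMod n} (δ_w(Q_i) − δ_w(Q'_i)) = δ_w(N), where N ⊆ Fin m is the set of all first n vertices. -/

import Mathlib

/-- A weight function on `m` vertices: symmetric, nonnegative, vanishing on the diagonal. -/
def IsWeight {m : ℕ} (w : Fin m → Fin m → ℝ) : Prop :=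
  (∀ i j, w i j = w j i) ∧ (∀ i j, 0 ≤ w i j) ∧ ∀ i, w i i = 0

/-- The cut function of a weight function: `δ_w(I) = ∑_{i ∈ I} ∑_{j ∉ I} w i j`. -/
def cut {m : ℕ} (w : Fin m → Fin m → ℝ) (I : Finset (Fin m)) : ℝ :=
  ∑ i ∈ I, ∑ j ∈ Iᶜ, w i j

/-- The Bell vector `β_{ij}`: value `1` on subsets containing exactly one of `i, j`, else `0`. -/
def bell {m : ℕ} (i j : Fin m) (I : Finset (Fin m)) : ℝ :=
  haveI : Decidable (Xor' (i ∈ I) (j ∈ I)) :=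
    inferInstanceAs (Decidable ((i ∈ I ∧ ¬j ∈ I) ∨ (j ∈ I ∧ ¬i ∈ I)))
  if Xor' (i ∈ I) (j ∈ I) then 1 else 0

/-- The identification of `ZMod (2k+1)` with the first `2k+1` elements of `Fin (2k+2)`. -/
def emb (k : ℕ) (x : ZMod (2 * k + 1)) : Fin (2 * k + 2) :=
  ⟨x.val, by have := x.val_lt; omega⟩

/-- `Q_i = {i, i+1, …, i+k}` (indices mod `n = 2k+1`), as a subset of `Fin (2k+2)`. -/
def Qset (k : ℕ) (i : ZMod (2 * k + 1)) : Finset (Fin (2 * k + 2)) :=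
  (Finset.range (k + 1)).image (fun h : ℕ => emb k (i + (h : ZMod (2 * k + 1))))

/-- `Q'_i = {i+1, …, i+k}` (indices mod `n = 2k+1`), as a subset of `Fin (2k+2)`. -/
def Qset' (k : ℕ) (i : ZMod (2 * k + 1)) : Finset (Fin (2 * k + 2)) :=
  (Finset.Icc 1 k).image (fun h : ℕ => emb k (i + (h : ZMod (2 * k + 1))))

/-- `N`, the set of all first `n = 2k+1` vertices of `Fin (2k+2)`. -/
def Nset (k : ℕ) : Finset (Fin (2 * k + 2)) :=
  Finset.univ.image (emb k)

lemma emb_injective (k : ℕ) : Function.Injective (emb k) := by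
  intro a b h
  exact ZMod.val_injective _ (by simpa [emb, Fin.ext_iff] using h)

lemma cut_eq_sub {m : ℕ} (w : Fin m → Fin m → ℝ) (I : Finset (Fin m)) :
    cut w I = (∑ a ∈ I, ∑ b, w a b) - ∑ a ∈ I, ∑ b ∈ I, w a b := by
  unfold cut
  rw [← Finset.sum_sub_distrib]
  refine Finset.sum_congr rfl fun a _ => ?_
  rw [eq_sub_iff_add_eq, Finset.sum_compl_add_sum]

/-- Core combinatorial identity on `ZMod (2k+1)`. -/
lemma double_sum_eq (k : ℕ) (g : ZMod (2*k+1) → ZMod (2*k+1) → ℝ)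
    (hsym : ∀ x y, g x y = g y x) (hdiag : ∀ x, g x x = 0) :
    ∑ x, ∑ y, g x y = 2 * ∑ x, ∑ h ∈ Finset.Icc 1 k, g x (x + (h : ZMod (2*k+1))) := by
  have hcast : ∀ {h : ℕ}, h < 2*k+1 → ((h : ZMod (2*k+1)).val = h) :=
    fun hh => ZMod.val_natCast_of_lt hh
  have h1 : ∀ x : ZMod (2*k+1), ∑ y, g x y = ∑ d, g x (x + d) :=
    fun x => (Fintype.sum_equiv (Equiv.addLeft x) _ _ (fun d => rfl)).symm
  set f : ZMod (2*k+1) → ℝ := fun d => ∑ x, g x (x + d) with hf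
  have h2 : ∑ x, ∑ y, g x y = ∑ d, f d := by
    simp_rw [h1]; rw [Finset.sum_comm]
  have h3 : (Finset.univ : Finset (ZMod (2*k+1))) =
      (Finset.range (2*k+1)).image (fun j : ℕ => (j : ZMod (2*k+1))) := by
    ext d
    simp only [Finset.mem_univ, true_iff, Finset.mem_image, Finset.mem_range]
    exact ⟨d.val, d.val_lt, by simp [ZMod.natCast_val, ZMod.cast_id]⟩
  have hinj : ∀ j1 ∈ Finset.range (2*k+1), ∀ j2 ∈ Finset.range (2*k+1),
      (j1 : ZMod (2*k+1)) = (j2 : ZMod (2*k+1)) → j1 = j2 := by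
    intro j1 hj1 j2 hj2 h
    have := congrArg ZMod.val h
    rwa [hcast (Finset.mem_range.mp hj1), hcast (Finset.mem_range.mp hj2)] at this
  have h4 : ∑ d, f d = ∑ j ∈ Finset.range (2*k+1), f (j : ZMod (2*k+1)) := by
    rw [h3, Finset.sum_image hinj]
  have h5 : Finset.range (2*k+1) =
      insert 0 (Finset.Icc 1 k ∪ Finset.Icc (k+1) (2*k)) := by
    ext a
    simp only [Finset.mem_range, Finset.mem_insert, Finset.mem_union, Finset.mem_Icc]
    omega
  have h0 : f ((0 : ℕ) : ZMod (2*k+1)) = 0 := by simp [hf, hdiag]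
  have hfneg : ∀ d : ZMod (2*k+1), f (-d) = f d := by
    intro d
    show (∑ x, g x (x + -d)) = ∑ x, g x (x + d)
    have e1 : ∑ x, g (x + d) x = ∑ x, g x (x + -d) :=
      Fintype.sum_equiv (Equiv.addRight d) _ _ (fun x => by simp)
    rw [← e1]
    exact Finset.sum_congr rfl fun x _ => hsym _ _
  have hflip : ∑ j ∈ Finset.Icc (k+1) (2*k), f (j : ZMod (2*k+1))
      = ∑ h ∈ Finset.Icc 1 k, f (h : ZMod (2*k+1)) := by
    refine Finset.sum_nbij' (fun j => 2*k+1-j) (fun h => 2*k+1-h) ?_ ?_ ?_ ?_ ?_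
    · intro a ha; simp only [Finset.mem_Icc] at *; omega
    · intro a ha; simp only [Finset.mem_Icc] at *; omega
    · intro a ha; simp only [Finset.mem_Icc] at ha; omega
    · intro a ha; simp only [Finset.mem_Icc] at ha; omega
    · intro a ha
      simp only [Finset.mem_Icc] at ha
      have key : ((2*k+1-a : ℕ) : ZMod (2*k+1)) = -((a : ℕ) : ZMod (2*k+1)) := by
        have hsum : (2*k+1-a : ℕ) + a = 2*k+1 := by omega
        have h2 : ((2*k+1-a : ℕ) : ZMod (2*k+1)) + ((a : ℕ) : ZMod (2*k+1)) = 0 := by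
          rw [← Nat.cast_add, hsum]
          exact_mod_cast ZMod.natCast_self (2*k+1)
        linear_combination h2
      rw [← hfneg, ← key]
  have hdisj0 : (0 : ℕ) ∉ Finset.Icc 1 k ∪ Finset.Icc (k+1) (2*k) := by
    simp only [Finset.mem_union, Finset.mem_Icc]; omega
  have hdisj : Disjoint (Finset.Icc 1 k) (Finset.Icc (k+1) (2*k)) := by
    rw [Finset.disjoint_left]
    intro a ha ha'
    simp only [Finset.mem_Icc] at ha ha'
    omega
  rw [h2, h4, h5, Finset.sum_insert hdisj0, Finset.sum_union hdisj, h0, hflip, zero_add]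
  rw [hf]
  rw [Finset.sum_comm]
  ring

theorem cyclic_equality_cut (k : ℕ) (w : Fin (2 * k + 2) → Fin (2 * k + 2) → ℝ)
    (hw : IsWeight w) :
    ∑ i : ZMod (2 * k + 1), (cut w (Qset k i) - cut w (Qset' k i)) = cut w (Nset k) := by
  obtain ⟨hsym, -, hdiag⟩ := hw
  -- cast injectivity on [0, 2k+1)
  have hcast : ∀ {h : ℕ}, h < 2*k+1 → ((h : ZMod (2*k+1)).val = h) :=
    fun hh => ZMod.val_natCast_of_lt hh
  -- Qset = insert (emb k i) (Qset' k i), with emb k i not in Qset'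
  have hnotmem : ∀ i : ZMod (2*k+1), emb k i ∉ Qset' k i := by
    intro i hmem
    simp only [Qset', Finset.mem_image, Finset.mem_Icc] at hmem
    obtain ⟨h, ⟨h1, h2⟩, heq⟩ := hmem
    have h3 : i + (h : ZMod (2*k+1)) = i := emb_injective k heq
    have h4 : (h : ZMod (2*k+1)) = 0 := by
      have := congrArg (fun z => z - i) h3
      simpa using this
    have h5 := congrArg ZMod.val h4
    rw [hcast (by omega)] at h5
    simp at h5
    omega
  have hQ : ∀ i : ZMod (2*k+1), Qset k i = insert (emb k i) (Qset' k i) := by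
    intro i
    have hr : Finset.range (k+1) = insert 0 (Finset.Icc 1 k) := by
      ext a
      simp only [Finset.mem_range, Finset.mem_insert, Finset.mem_Icc]
      omega
    rw [Qset, hr, Finset.image_insert]
    simp only [Nat.cast_zero, add_zero]
    rfl
  -- injectivity of h ↦ emb k (i + h) on Icc 1 k
  have hinjQ : ∀ i : ZMod (2*k+1), ∀ h1 ∈ Finset.Icc 1 k, ∀ h2 ∈ Finset.Icc 1 k,
      emb k (i + (h1 : ZMod (2*k+1))) = emb k (i + (h2 : ZMod (2*k+1))) → h1 = h2 := by
    intro i h1 hm1 h2 hm2 heq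
    simp only [Finset.mem_Icc] at hm1 hm2
    have := add_left_cancel (emb_injective k heq)
    have := congrArg ZMod.val this
    rwa [hcast (by omega), hcast (by omega)] at this
  -- rewrite cut differences
  have step : ∀ i : ZMod (2*k+1), cut w (Qset k i) - cut w (Qset' k i) =
      (∑ b, w (emb k i) b)
        - 2 * ∑ h ∈ Finset.Icc 1 k, w (emb k i) (emb k (i + (h : ZMod (2*k+1)))) := by
    intro i
    rw [cut_eq_sub, cut_eq_sub, hQ i]
    rw [Finset.sum_insert (hnotmem i), Finset.sum_insert (hnotmem i)]
    have inner : ∀ a, ∑ b ∈ insert (emb k i) (Qset' k i), w a b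
        = w a (emb k i) + ∑ b ∈ Qset' k i, w a b :=
      fun a => Finset.sum_insert (hnotmem i)
    rw [inner]
    have inner2 : ∑ a ∈ Qset' k i, ∑ b ∈ insert (emb k i) (Qset' k i), w a b
        = ∑ a ∈ Qset' k i, (w a (emb k i) + ∑ b ∈ Qset' k i, w a b) :=
      Finset.sum_congr rfl fun a _ => inner a
    rw [inner2, Finset.sum_add_distrib]
    have hQ'sum : ∑ a ∈ Qset' k i, w a (emb k i)
        = ∑ h ∈ Finset.Icc 1 k, w (emb k i) (emb k (i + (h : ZMod (2*k+1)))) := by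
      rw [Qset', Finset.sum_image (hinjQ i)]
      exact Finset.sum_congr rfl fun h _ => hsym _ _
    have hQ'sum2 : ∑ b ∈ Qset' k i, w (emb k i) b
        = ∑ h ∈ Finset.Icc 1 k, w (emb k i) (emb k (i + (h : ZMod (2*k+1)))) := by
      rw [Qset', Finset.sum_image (hinjQ i)]
    rw [hQ'sum, hQ'sum2, hdiag]
    ring
  rw [Finset.sum_congr rfl fun i _ => step i]
  -- RHS
  have hN : cut w (Nset k) = (∑ i : ZMod (2*k+1), ∑ b, w (emb k i) b)
      - ∑ x : ZMod (2*k+1), ∑ y : ZMod (2*k+1), w (emb k x) (emb k y) := by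
    rw [cut_eq_sub, Nset, Finset.sum_image (fun a _ b _ h => emb_injective k h),
      Finset.sum_image (fun a _ b _ h => emb_injective k h)]
    congr 1
    refine Finset.sum_congr rfl fun x _ => ?_
    rw [Finset.sum_image (fun a _ b _ h => emb_injective k h)]
  rw [hN, Finset.sum_sub_distrib]
  have key := double_sum_eq k (fun x y => w (emb k x) (emb k y))
    (fun x y => hsym _ _) (fun x => hdiag _)
  rw [← Finset.mul_sum, ← key]
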